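/- The map φ̃ : V × ZMod 2 → V × ZMod 2 given by φ̃(v,i) = (r(v),i) is a graph automorphism of the strong product Γ[K₂] with φ̃ ∘ φ̃ = id and φ̃ ≠ id, and it interchanges only non-adjacent vertices: for every vertex (v,i) with φ̃(v,i) ≠ (v,i), the vertices (v,i) and (r(v),i) are not adjacent in Γ[K₂]. -/

import Mathlib

open SimpleGraph Polynomial Matrix

/-- `V` is the 5-dimensional vector space over `GF(3)`. -/
abbrev V : Type := Fin 5 → ZMod 3

/-- The specific parity-check matrix of the ternary Golay code. -/
def H : Matrix (Fin 5) (Fin 11) (ZMod 3) :=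
  !![1,1,1,2,2,0,1,0,0,0,0;
     1,1,2,1,0,2,0,1,0,0,0;
     1,2,1,0,1,2,0,0,1,0,0;
     1,2,0,1,2,1,0,0,0,1,0;
     1,0,2,2,1,1,0,0,0,0,1]

/-- `S₂ = {±x₁, …, ±x₁₁}` where `x₁, …, x₁₁` are the columns of `H`. -/
def S2 : Set V := {v | ∃ j : Fin 11, v = (fun i => H i j) ∨ v = -(fun i => H i j)}

instance : DecidablePred (· ∈ S2) := fun v =>
  decidable_of_iff (∃ j : Fin 11, v = (fun i => H i j) ∨ v = -(fun i => H i j)) Iff.rfl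

/-- The reversal map sending `(a,b,c,d,e)` to `(e,d,c,b,a)`. -/
def r (v : V) : V := fun i => v i.rev

/-- The Berlekamp–Van Lint–Seidel graph `Γ = Cay(V, S₂)`:
`u` is adjacent to `v` iff `u ≠ v` and `u - v ∈ S₂`. -/
def Γ : SimpleGraph V where
  Adj u v := u ≠ v ∧ u - v ∈ S2
  symm := ⟨by
    rintro u v ⟨hne, j, hj⟩
    refine ⟨hne.symm, j, ?_⟩
    rcases hj with h | h
    · right; rw [← neg_sub, h]
    · left; rw [← neg_sub, h, neg_neg]⟩
  loopless := ⟨fun v h => h.1 rfl⟩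

instance : DecidableRel Γ.Adj := fun u v =>
  decidable_of_iff (u ≠ v ∧ u - v ∈ S2) Iff.rfl

/-- The strong product `Γ[K₂]` of the Berlekamp–Van Lint–Seidel graph with an edge:
`(u,i)` is adjacent to `(v,j)` iff `(u,i) ≠ (v,j)` and (`u = v` or `u` adjacent to `v` in `Γ`). -/
def ΓK2 : SimpleGraph (V × ZMod 2) where
  Adj p q := p ≠ q ∧ (p.1 = q.1 ∨ Γ.Adj p.1 q.1)
  symm := ⟨by
    rintro p q ⟨h1, h2⟩
    exact ⟨h1.symm, h2.imp Eq.symm fun h => h.symm⟩⟩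
  loopless := ⟨fun p h => h.1 rfl⟩

instance : DecidableRel ΓK2.Adj := fun p q =>
  decidable_of_iff (p ≠ q ∧ (p.1 = q.1 ∨ Γ.Adj p.1 q.1)) Iff.rfl

/-- The induced map `φ̃(v, i) = (r v, i)` on `V × ZMod 2`. -/
def φt : V × ZMod 2 → V × ZMod 2 := fun p => (r p.1, p.2)


lemma r_r (v : V) : r (r v) = v := by
  funext i; simp [r, Fin.rev_rev]

lemma r_sub (u v : V) : r (u - v) = r u - r v := rfl

set_option maxRecDepth 10000 in
lemma r_mem_S2 : ∀ v : V, v ∈ S2 → r v ∈ S2 := by decide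

lemma r_mem_S2_iff (v : V) : r v ∈ S2 ↔ v ∈ S2 :=
  ⟨fun h => r_r v ▸ r_mem_S2 _ h, r_mem_S2 v⟩

lemma r_inj : Function.Injective r := fun u v h => by
  rw [← r_r u, h, r_r]

lemma adj_r (u v : V) : Γ.Adj (r u) (r v) ↔ Γ.Adj u v := by
  constructor
  · rintro ⟨h1, h2⟩
    exact ⟨fun h => h1 (by rw [h]), by rwa [← r_sub, r_mem_S2_iff] at h2⟩
  · rintro ⟨h1, h2⟩
    exact ⟨fun h => h1 (r_inj h), by rwa [← r_sub, r_mem_S2_iff]⟩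

set_option maxRecDepth 10000 in
lemma nonadj : ∀ v : V, v ≠ r v → v - r v ∉ S2 := by decide

/-- `φ̃` is a graph automorphism of `Γ[K₂]` with `φ̃ ∘ φ̃ = id` and `φ̃ ≠ id` which
interchanges only non-adjacent vertices. -/
theorem induced_reversal_is_order_two_automorphism_interchanging_only_nonadjacent :
    (∀ p q : V × ZMod 2, ΓK2.Adj (φt p) (φt q) ↔ ΓK2.Adj p q) ∧
    (φt ∘ φt = id) ∧ (φt ≠ id) ∧
    (∀ p : V × ZMod 2, φt p ≠ p → ¬ ΓK2.Adj p (φt p)) := by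
  refine ⟨?_, ?_, ?_, ?_⟩
  · rintro ⟨u, i⟩ ⟨v, j⟩
    constructor
    · rintro ⟨h1, h2⟩
      refine ⟨fun h => h1 (by rw [h]), ?_⟩
      rcases h2 with h | h
      · exact Or.inl (r_inj h)
      · exact Or.inr ((adj_r u v).mp h)
    · rintro ⟨h1, h2⟩
      refine ⟨fun h => h1 ?_, ?_⟩
      · have h1' := congrArg Prod.fst h
        have h2' := congrArg Prod.snd h
        simp only [φt] at h1' h2'
        exact Prod.ext (r_inj h1') h2'
      · rcases h2 with h | h
        · exact Or.inl (congrArg r h)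
        · exact Or.inr ((adj_r u v).mpr h)
  · funext p
    simp [φt, r_r]
  · intro h
    have := congrFun h (![1,0,0,0,0], 0)
    have h2 := congrArg Prod.fst this
    have h3 := congrFun h2 0
    simp [φt, r] at h3
  · rintro ⟨v, i⟩ hne ⟨h1, h2⟩
    have hv : v ≠ r v := by
      intro h; exact hne (by simp [φt, ← h])
    rcases h2 with h | h
    · exact hv h
    · exact nonadj v hv h.2
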